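/- Let S = R[T_1,…,T_k] be a polynomial ring graded by a finitely generated abelian group D via deg(T_i) = d_i, and let T^n = T_1^{n_1}⋯T_k^{n_k} be a relevant monomial with support J = {i : n_i > 0}. Then the degree-zero part of the localization S_{T^n} equals the monoid algebra R[M_J], where M_J = {m ∈ ℤ^k : m_i ≥ 0 for i ∉ J and Σ m_i d_i = 0}. -/

import Mathlib

open MvPolynomial

/-- The monoid `M_J = {m ∈ ℤ^k : mᵢ ≥ 0 for i ∉ J and Σ mᵢ dᵢ = 0}`, where
`J = {i : nᵢ > 0}` is the support of the monomial `T^n`. -/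
def MJ {k : ℕ} {D : Type*} [AddCommGroup D] (dw : Fin k → D) (n : Fin k → ℕ) :
    AddSubmonoid (Fin k → ℤ) where
  carrier := {m | (∀ i, n i = 0 → 0 ≤ m i) ∧ ∑ i, m i • dw i = 0}
  zero_mem' := by simp
  add_mem' := by
    rintro a b ⟨ha1, ha2⟩ ⟨hb1, hb2⟩
    refine ⟨fun i hi => add_nonneg (ha1 i hi) (hb1 i hi), ?_⟩
    simp only [Pi.add_apply, add_zsmul]
    rw [Finset.sum_add_distrib, ha2, hb2, add_zero]

namespace Stmt15Aux

variable {k : ℕ}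

/-- The exponent vector `n` as a finsupp. -/
noncomputable def nu (n : Fin k → ℕ) : Fin k →₀ ℕ := Finsupp.equivFunOnFinite.symm n

@[simp] lemma nu_apply (n : Fin k → ℕ) (i : Fin k) : nu n i = n i := rfl

/-- The exponent vector of the numerator of `T^m / (T^n)^j`. -/
noncomputable def E (n : Fin k → ℕ) (m : Fin k → ℤ) (j : ℕ) : Fin k →₀ ℕ :=
  Finsupp.equivFunOnFinite.symm fun i => (m i + (j * n i : ℕ)).toNat

@[simp] lemma E_apply (n : Fin k → ℕ) (m : Fin k → ℤ) (j : ℕ) (i : Fin k) :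
    E n m j i = (m i + (j * n i : ℕ)).toNat := rfl

/-- A sufficient denominator exponent for `m`. -/
def jbd (m : Fin k → ℤ) : ℕ := Finset.univ.sup fun i => (-m i).toNat

lemma jbd_spec (n : Fin k → ℕ) {m : Fin k → ℤ} (hm : ∀ i, n i = 0 → 0 ≤ m i)
    {j : ℕ} (hj : jbd m ≤ j) : ∀ i, 0 ≤ m i + (j * n i : ℕ) := by
  intro i
  rcases Nat.eq_zero_or_pos (n i) with h | h
  · simpa [h] using hm i h
  · have h1 : -m i ≤ ((-m i).toNat : ℤ) := Int.self_le_toNat _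
    have h2 : ((-m i).toNat : ℤ) ≤ (j : ℤ) := by
      exact_mod_cast le_trans (Finset.le_sup (Finset.mem_univ i)) hj
    have h3 : (j : ℤ) ≤ ((j * n i : ℕ) : ℤ) := by
      have : j * 1 ≤ j * n i := Nat.mul_le_mul_left j h
      exact_mod_cast by simpa using this
    linarith

lemma E_add_smul (n : Fin k → ℕ) {m : Fin k → ℤ} {j : ℕ}
    (hj : ∀ i, 0 ≤ m i + (j * n i : ℕ)) (c : ℕ) :
    E n m j + c • nu n = E n m (j + c) := by
  ext i
  have h := hj i
  simp only [Finsupp.add_apply, Finsupp.smul_apply, E_apply, nu_apply, smul_eq_mul]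
  have hd : (j + c) * n i = j * n i + c * n i := by ring
  omega

lemma E_add (n : Fin k → ℕ) {a b : Fin k → ℤ} {ja jb : ℕ}
    (ha : ∀ i, 0 ≤ a i + (ja * n i : ℕ)) (hb : ∀ i, 0 ≤ b i + (jb * n i : ℕ)) :
    E n a ja + E n b jb = E n (a + b) (ja + jb) := by
  ext i
  have h1 := ha i
  have h2 := hb i
  simp only [Finsupp.add_apply, E_apply, Pi.add_apply]
  have hd : (ja + jb) * n i = ja * n i + jb * n i := by ring
  omega

lemma E_injOn (n : Fin k → ℕ) {a b : Fin k → ℤ} {j : ℕ}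
    (ha : ∀ i, 0 ≤ a i + (j * n i : ℕ)) (hb : ∀ i, 0 ≤ b i + (j * n i : ℕ))
    (h : E n a j = E n b j) : a = b := by
  funext i
  have h1 := ha i
  have h2 := hb i
  have h3 : E n a j i = E n b j i := by rw [h]
  simp only [E_apply] at h3
  omega

variable {R : Type*} [CommRing R]

/-- `T^n` as a multivariate polynomial. -/
noncomputable abbrev Ff (n : Fin k → ℕ) (R : Type*) [CommRing R] : MvPolynomial (Fin k) R :=
  ∏ i, X i ^ n i

lemma Ff_eq (n : Fin k → ℕ) : Ff n R = monomial (nu n) (1 : R) := by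
  rw [← prod_X_pow_eq_monomial]
  symm
  apply Finset.prod_subset (Finset.subset_univ _)
  intro i _ hi
  have : nu n i = 0 := Finsupp.notMem_support_iff.mp hi
  simp [this]

lemma Ff_pow_eq (n : Fin k → ℕ) (c : ℕ) : (Ff n R) ^ c = monomial (c • nu n) (1 : R) := by
  rw [Ff_eq, monomial_pow, one_pow]

/-- The localization map. -/
noncomputable abbrev alg (n : Fin k → ℕ) (R : Type*) [CommRing R] :
    MvPolynomial (Fin k) R →+* Localization.Away (Ff n R) :=
  algebraMap (MvPolynomial (Fin k) R) (Localization.Away (Ff n R))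

lemma isUnit_algF (n : Fin k → ℕ) : IsUnit (alg n R (Ff n R)) :=
  IsLocalization.Away.algebraMap_isUnit (Ff n R)

/-- The image of the Laurent monomial `T^m` in the localization. -/
noncomputable def valm (n : Fin k → ℕ) (R : Type*) [CommRing R] (m : Fin k → ℤ) :
    Localization.Away (Ff n R) :=
  alg n R (monomial (E n m (jbd m)) 1) * ↑((isUnit_algF (R := R) n).unit⁻¹ ^ jbd m)

lemma valm_mul_pow (n : Fin k → ℕ) {m : Fin k → ℤ} (hm : ∀ i, n i = 0 → 0 ≤ m i)
    {j : ℕ} (hj : ∀ i, 0 ≤ m i + (j * n i : ℕ)) :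
    valm n R m * alg n R (Ff n R) ^ j = alg n R (monomial (E n m j) 1) := by
  have hu := isUnit_algF (R := R) n
  apply (hu.pow (jbd m)).mul_left_inj.mp
  have hpow : alg n R (Ff n R) ^ jbd m = ↑(hu.unit ^ jbd m) := by
    rw [Units.val_pow_eq_pow_val, hu.unit_spec]
  calc valm n R m * alg n R (Ff n R) ^ j * alg n R (Ff n R) ^ jbd m
      = alg n R (monomial (E n m (jbd m)) 1) *
        (↑(hu.unit⁻¹ ^ jbd m) * ↑(hu.unit ^ jbd m)) * alg n R (Ff n R) ^ j := by
        rw [hpow, valm]; ring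
    _ = alg n R (monomial (E n m (jbd m)) 1) * alg n R (Ff n R) ^ j := by
        rw [← Units.val_mul, inv_pow, inv_mul_cancel, Units.val_one, mul_one]
    _ = alg n R (monomial (E n m (jbd m)) 1 * (Ff n R) ^ j) := by rw [map_mul, map_pow]
    _ = alg n R (monomial (E n m (jbd m + j)) 1) := by
        rw [Ff_pow_eq, monomial_mul, one_mul,
          E_add_smul n (jbd_spec n hm le_rfl) j]
    _ = alg n R (monomial (E n m j) 1 * (Ff n R) ^ jbd m) := by
        rw [Ff_pow_eq, monomial_mul, one_mul, E_add_smul n hj (jbd m), add_comm]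
    _ = alg n R (monomial (E n m j) 1) * alg n R (Ff n R) ^ jbd m := by rw [map_mul, map_pow]


lemma valm_zero (n : Fin k → ℕ) : valm n R (0 : Fin k → ℤ) = 1 := by
  have h0 : ∀ i, (0 : ℤ) ≤ (0 : Fin k → ℤ) i + ((0 * n i : ℕ) : ℤ) := by simp
  have h := valm_mul_pow (R := R) n (m := (0 : Fin k → ℤ)) (fun i _ => le_rfl) h0
  have hE : E n (0 : Fin k → ℤ) 0 = 0 := by ext i; simp
  simpa [hE] using h

variable {D : Type*} [AddCommGroup D]

/-- The monoid hom from `M_J` to the localization. -/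
noncomputable def gmon (dw : Fin k → D) (n : Fin k → ℕ) (R : Type*) [CommRing R] :
    Multiplicative (MJ dw n) →* Localization.Away (Ff n R) where
  toFun m := valm n R ((Multiplicative.toAdd m : MJ dw n) : Fin k → ℤ)
  map_one' := by
    have h0 : ∀ i, (0 : ℤ) ≤ (0 : Fin k → ℤ) i + ((0 * n i : ℕ) : ℤ) := by simp
    have := valm_mul_pow (R := R) n (m := (0 : Fin k → ℤ)) (fun i _ => le_rfl) h0
    have hE : E n (0 : Fin k → ℤ) 0 = 0 := by ext i; simp
    simpa [hE] using this
  map_mul' a b := by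
    set a' : MJ dw n := Multiplicative.toAdd a
    set b' : MJ dw n := Multiplicative.toAdd b
    have ha := jbd_spec n (a'.2.1) (le_refl (jbd (a' : Fin k → ℤ)))
    have hb := jbd_spec n (b'.2.1) (le_refl (jbd (b' : Fin k → ℤ)))
    have hab : ∀ i, 0 ≤ ((a' : Fin k → ℤ) + (b' : Fin k → ℤ)) i
        + ((jbd (a' : Fin k → ℤ) + jbd (b' : Fin k → ℤ)) * n i : ℕ) := by
      intro i
      have h1 := ha i
      have h2 := hb i
      have hd : (jbd (a' : Fin k → ℤ) + jbd (b' : Fin k → ℤ)) * n i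
          = jbd (a' : Fin k → ℤ) * n i + jbd (b' : Fin k → ℤ) * n i := by ring
      simp only [Pi.add_apply]
      omega
    have hu := isUnit_algF (R := R) n
    apply (hu.pow (jbd (a' : Fin k → ℤ) + jbd (b' : Fin k → ℤ))).mul_left_inj.mp
    have hcoe : ((Multiplicative.toAdd (a * b) : MJ dw n) : Fin k → ℤ)
        = (a' : Fin k → ℤ) + (b' : Fin k → ℤ) := rfl
    calc valm n R ((Multiplicative.toAdd (a * b) : MJ dw n) : Fin k → ℤ)
          * alg n R (Ff n R) ^ (jbd (a' : Fin k → ℤ) + jbd (b' : Fin k → ℤ))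
        = alg n R (monomial (E n ((a' : Fin k → ℤ) + (b' : Fin k → ℤ))
            (jbd (a' : Fin k → ℤ) + jbd (b' : Fin k → ℤ))) 1) := by
          rw [hcoe]
          exact valm_mul_pow n (fun i hi =>
            add_nonneg (a'.2.1 i hi) (b'.2.1 i hi)) hab
      _ = alg n R (monomial (E n (a' : Fin k → ℤ) (jbd (a' : Fin k → ℤ))
            + E n (b' : Fin k → ℤ) (jbd (b' : Fin k → ℤ))) 1) := by
          rw [E_add n ha hb]
      _ = alg n R (monomial (E n (a' : Fin k → ℤ) (jbd (a' : Fin k → ℤ))) 1)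
          * alg n R (monomial (E n (b' : Fin k → ℤ) (jbd (b' : Fin k → ℤ))) 1) := by
          rw [← map_mul, monomial_mul, one_mul]
      _ = (valm n R (a' : Fin k → ℤ) * alg n R (Ff n R) ^ jbd (a' : Fin k → ℤ))
          * (valm n R (b' : Fin k → ℤ) * alg n R (Ff n R) ^ jbd (b' : Fin k → ℤ)) := by
          rw [valm_mul_pow n a'.2.1 ha, valm_mul_pow n b'.2.1 hb]
      _ = valm n R (a' : Fin k → ℤ) * valm n R (b' : Fin k → ℤ)
          * alg n R (Ff n R) ^ (jbd (a' : Fin k → ℤ) + jbd (b' : Fin k → ℤ)) := by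
          rw [pow_add]; ring

/-- The ring homomorphism `R[M_J] → S_{T^n}`. -/
noncomputable def phi (dw : Fin k → D) (n : Fin k → ℕ) (R : Type*) [CommRing R] :
    AddMonoidAlgebra R (MJ dw n) →+* Localization.Away (Ff n R) :=
  AddMonoidAlgebra.liftNCRingHom ((alg n R).comp C) (gmon dw n R) (fun _ _ => Commute.all _ _)

lemma phi_single (dw : Fin k → D) (n : Fin k → ℕ) (m : MJ dw n) (r : R) :
    phi dw n R (AddMonoidAlgebra.single m r)
      = alg n R (C r) * valm n R (m : Fin k → ℤ) :=
  AddMonoidAlgebra.liftNC_single _ _ _ _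

lemma phi_single_mul_pow (dw : Fin k → D) (n : Fin k → ℕ) (m : MJ dw n) (r : R)
    {j : ℕ} (hj : ∀ i, 0 ≤ (m : Fin k → ℤ) i + (j * n i : ℕ)) :
    phi dw n R (AddMonoidAlgebra.single m r) * alg n R (Ff n R) ^ j
      = alg n R (monomial (E n (m : Fin k → ℤ) j) r) := by
  rw [phi_single, mul_assoc, valm_mul_pow n m.2.1 hj, ← map_mul, C_mul_monomial, mul_one]


lemma phi_mul_pow (dw : Fin k → D) (n : Fin k → ℕ) (p : AddMonoidAlgebra R (MJ dw n)) {J : ℕ}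
    (hJ : ∀ m ∈ p.coeff.support, jbd (↑m : Fin k → ℤ) ≤ J) :
    phi dw n R p * alg n R (Ff n R) ^ J
      = alg n R (∑ m ∈ p.coeff.support, monomial (E n (↑m : Fin k → ℤ) J) (p.coeff m)) := by
  have hp : p = ∑ m ∈ p.coeff.support, AddMonoidAlgebra.single m (p.coeff m) := by
    apply AddMonoidAlgebra.ext
    rw [AddMonoidAlgebra.coeff_sum]
    simp only [AddMonoidAlgebra.coeff_single]
    have := (Finsupp.sum_single p.coeff).symm
    rwa [Finsupp.sum] at this
  rw [map_sum]
  conv_lhs => rw [hp]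
  rw [map_sum, Finset.sum_mul]
  exact Finset.sum_congr rfl fun m hm =>
    phi_single_mul_pow dw n m (p.coeff m) (jbd_spec n m.2.1 (hJ m hm))

lemma weight_eq_zsum (dw : Fin k → D) (e : Fin k →₀ ℕ) :
    (Finsupp.weight dw e : D) = ∑ i, ((e i : ℤ)) • dw i := by
  rw [Finsupp.weight_apply, Finsupp.sum_fintype]
  · exact Finset.sum_congr rfl fun i _ => (natCast_zsmul _ _).symm
  · intro i; simp

lemma target_zsum (dw : Fin k → D) (n : Fin k → ℕ) (J : ℕ) :
    (J • ∑ i, n i • dw i : D) = ∑ i, (((J * n i : ℕ) : ℤ)) • dw i := by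
  rw [Finset.smul_sum]
  refine Finset.sum_congr rfl fun i _ => ?_
  rw [smul_smul, natCast_zsmul]

lemma weight_E_eq (dw : Fin k → D) (n : Fin k → ℕ) (m : MJ dw n) (J : ℕ)
    (hJ : ∀ i, 0 ≤ (↑m : Fin k → ℤ) i + (J * n i : ℕ)) :
    Finsupp.weight dw (E n (↑m : Fin k → ℤ) J) = J • ∑ i, n i • dw i := by
  rw [weight_eq_zsum, target_zsum dw n J]
  have hm2 := m.2.2
  calc ∑ i, ((E n (↑m : Fin k → ℤ) J i : ℤ)) • dw i
      = ∑ i, ((↑m : Fin k → ℤ) i + ((J * n i : ℕ) : ℤ)) • dw i := by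
        refine Finset.sum_congr rfl fun i _ => ?_
        rw [E_apply, Int.toNat_of_nonneg (hJ i)]
    _ = (∑ i, (↑m : Fin k → ℤ) i • dw i) + ∑ i, ((J * n i : ℕ) : ℤ) • dw i := by
        simp only [add_zsmul]
        rw [Finset.sum_add_distrib]
    _ = ∑ i, ((J * n i : ℕ) : ℤ) • dw i := by rw [hm2, zero_add]

end Stmt15Aux


open Stmt15Aux in
/-- Let `S = R[T_1,…,T_k]` be graded by a finitely generated abelian group
`D` via `deg Tᵢ = dᵢ`, and let `T^n` be a relevant monomial (the degrees of its variables
with positive exponent generate a finite-index subgroup).  Then the degree-zero part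
`S_{(T^n)}` of the localization `S_{T^n}` is isomorphic, as an `R`-algebra, to the monoid
algebra `R[M_J]`: there is an injective ring homomorphism
`R[M_J] → S_{T^n}` sending `single 0 r` to `r`, whose range is exactly the set of
degree-zero elements `a/(T^n)^j` (with `a` weighted-homogeneous of degree `j • deg(T^n)`). -/
theorem stmt_15 {k : ℕ} {D R : Type*} [AddCommGroup D] [AddGroup.FG D] [DecidableEq D]
    [CommRing R] (dw : Fin k → D) (n : Fin k → ℕ)
    (hrel : (AddSubgroup.closure {e : D | ∃ i, 0 < n i ∧ e = dw i}).FiniteIndex) :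
    ∃ φ : AddMonoidAlgebra R (MJ dw n) →+*
        Localization.Away (∏ i, (X i : MvPolynomial (Fin k) R) ^ n i),
      Function.Injective φ ∧
      (∀ r : R, φ (AddMonoidAlgebra.single 0 r) =
        algebraMap (MvPolynomial (Fin k) R) _ (C r)) ∧
      Set.range φ = {x | ∃ (j : ℕ) (a : MvPolynomial (Fin k) R),
        a ∈ weightedHomogeneousSubmodule R dw (j • ∑ i, n i • dw i) ∧
        x * algebraMap (MvPolynomial (Fin k) R) _ ((∏ i, (X i) ^ n i) ^ j) =
          algebraMap (MvPolynomial (Fin k) R) _ a} := by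
  classical
  refine ⟨phi dw n R, ?_, ?_, ?_⟩
  · -- injectivity
    rw [injective_iff_map_eq_zero]
    intro p hp
    set J := p.coeff.support.sup (fun m => jbd (↑m : Fin k → ℤ)) with hJdef
    have hJ : ∀ m ∈ p.coeff.support, jbd (↑m : Fin k → ℤ) ≤ J := fun m hm => Finset.le_sup (f := fun m => jbd ((m : MJ dw n) : Fin k → ℤ)) hm
    have h0 : alg n R (∑ m ∈ p.coeff.support, monomial (E n (↑m : Fin k → ℤ) J) (p.coeff m)) = 0 := by
      rw [← phi_mul_pow dw n p hJ, hp, zero_mul]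
    rw [IsLocalization.map_eq_zero_iff (Submonoid.powers (Ff n R))] at h0
    obtain ⟨⟨s, c, rfl⟩, hs⟩ := h0
    have hs' : (Ff n R) ^ c * (∑ m ∈ p.coeff.support, monomial (E n (↑m : Fin k → ℤ) J) (p.coeff m)) = 0 :=
      hs
    have hSzero : (∑ m ∈ p.coeff.support, monomial (E n (↑m : Fin k → ℤ) J) (p.coeff m)) = 0 := by
      ext d
      have h2 := congrArg (MvPolynomial.coeff (c • nu n + d)) hs'
      rw [Ff_pow_eq, coeff_monomial_mul, one_mul, coeff_zero] at h2
      simpa using h2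
    refine AddMonoidAlgebra.ext (Finsupp.ext fun m0 => ?_)
    show p.coeff m0 = 0
    by_cases hm0 : m0 ∈ p.coeff.support
    · have h3 := congrArg (MvPolynomial.coeff (E n (↑m0 : Fin k → ℤ) J)) hSzero
      rw [coeff_sum, coeff_zero, Finset.sum_eq_single m0] at h3
      · simpa [coeff_monomial] using h3
      · intro b hb hbne
        rw [coeff_monomial, if_neg]
        intro hEeq
        exact hbne (Subtype.ext (E_injOn n (jbd_spec n b.2.1 (hJ b hb))
          (jbd_spec n m0.2.1 (hJ m0 hm0)) hEeq))
      · intro h; exact absurd hm0 h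
    · exact Finsupp.notMem_support_iff.mp hm0
  · -- maps single 0 r to C r
    intro r
    rw [phi_single, ZeroMemClass.coe_zero, valm_zero, mul_one]
  · -- range
    ext x
    constructor
    · rintro ⟨p, rfl⟩
      set J := p.coeff.support.sup (fun m => jbd (↑m : Fin k → ℤ)) with hJdef
      refine ⟨J, ∑ m ∈ p.coeff.support, monomial (E n (↑m : Fin k → ℤ) J) (p.coeff m), ?_, ?_⟩
      · refine Submodule.sum_mem _ fun m hm => ?_
        rw [mem_weightedHomogeneousSubmodule]
        exact isWeightedHomogeneous_monomial _ _ _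
          (weight_E_eq dw n m J (jbd_spec n m.2.1 (Finset.le_sup (f := fun m => jbd ((m : MJ dw n) : Fin k → ℤ)) hm)))
      · rw [map_pow]
        exact phi_mul_pow dw n p (fun m hm => Finset.le_sup (f := fun m => jbd ((m : MJ dw n) : Fin k → ℤ)) hm)
    · rintro ⟨j, a, ha, heq⟩
      rw [mem_weightedHomogeneousSubmodule] at ha
      have hmem : ∀ d ∈ a.support,
          (fun i => (d i : ℤ) - (j * n i : ℕ)) ∈ MJ dw n := by
        intro d hd
        constructor
        · intro i hi
          simp only [hi, Nat.mul_zero, Nat.cast_zero, sub_zero]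
          exact Int.natCast_nonneg _
        · have hw : Finsupp.weight dw d = j • ∑ i, n i • dw i :=
            ha (MvPolynomial.mem_support_iff.mp hd)
          have h1 : ∑ i, ((d i : ℤ)) • dw i = Finsupp.weight dw d := (weight_eq_zsum dw d).symm
          calc ∑ i, ((d i : ℤ) - ((j * n i : ℕ) : ℤ)) • dw i
              = (∑ i, (d i : ℤ) • dw i) - ∑ i, ((j * n i : ℕ) : ℤ) • dw i := by
                rw [← Finset.sum_sub_distrib]
                exact Finset.sum_congr rfl fun i _ => sub_smul _ _ _
            _ = 0 := by rw [h1, hw, target_zsum dw n j, sub_self]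
      refine ⟨∑ d ∈ a.support.attach,
        AddMonoidAlgebra.single ⟨_, hmem d.1 d.2⟩ (MvPolynomial.coeff d.1 a), ?_⟩
      have hu := (isUnit_algF (R := R) n).pow j
      apply hu.mul_left_inj.mp
      rw [map_pow] at heq
      rw [heq]
      rw [map_sum, Finset.sum_mul]
      have key : ∀ d : a.support,
          phi dw n R (AddMonoidAlgebra.single ⟨_, hmem d.1 d.2⟩ (MvPolynomial.coeff d.1 a))
            * alg n R (Ff n R) ^ j = alg n R (monomial d.1 (MvPolynomial.coeff d.1 a)) := by
        intro d
        have hj : ∀ i, 0 ≤ ((⟨_, hmem d.1 d.2⟩ : MJ dw n) : Fin k → ℤ) i + (j * n i : ℕ) := by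
          intro i
          show 0 ≤ ((d.1 i : ℤ) - (j * n i : ℕ)) + (j * n i : ℕ)
          rw [sub_add_cancel]
          exact Int.natCast_nonneg _
        have hE : E n ((⟨_, hmem d.1 d.2⟩ : MJ dw n) : Fin k → ℤ) j = (d : Fin k →₀ ℕ) := by
          ext i
          show ((d.1 i : ℤ) - (j * n i : ℕ) + (j * n i : ℕ)).toNat = d.1 i
          rw [sub_add_cancel, Int.toNat_natCast]
        rw [phi_single_mul_pow dw n _ _ hj, hE]
      calc ∑ d ∈ a.support.attach,
            phi dw n R (AddMonoidAlgebra.single ⟨_, hmem d.1 d.2⟩ (MvPolynomial.coeff d.1 a))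
              * alg n R (Ff n R) ^ j
          = ∑ d ∈ a.support.attach, alg n R (monomial d.1 (MvPolynomial.coeff d.1 a)) := by
            exact Finset.sum_congr rfl fun d _ => key d
        _ = alg n R a := by
            rw [← map_sum]
            congr 1
            rw [Finset.sum_attach a.support (fun d => monomial d (MvPolynomial.coeff d a))]
            exact (MvPolynomial.as_sum a).symm
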